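/- arXiv:2311.11637 — 2 statements merged into one kernel-verified Lean document; each statement's English description precedes it below -/
import Mathlib

section
/- Let (ε̂, δ̂, χ̂, α̂, β̂, γ̂) be an optimal solution of the radial CNLS problem: minimize Σᵢ εᵢ² subject to ln x₁ᵢ = −ln(χᵢ) + δ(ln x₁ᵢ − ln x₂ᵢ) + εᵢ, χᵢ = αᵢ + βᵢᵀ(xᵢ/(x₁ᵢ^{1−d} x₂ᵢ^d)) − γᵢᵀyᵢ for all i, χᵢ ≤ α_h + β_hᵀ(xᵢ/(x₁ᵢ^{1−d} x₂ᵢ^d)) − γ_hᵀyᵢ for all i,h, and βᵢ ≥ 0, γᵢ ≥ 0. Then the residuals satisfy the sample orthogonality condition Σᵢ (ln x₁ᵢ − ln x₂ᵢ)·ε̂ᵢ = 0. -/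
open Real

/-- Feasibility for the radial CNLS problem (two inputs, `s` outputs),
with normalization parameter `d`. -/
def RadialCNLSFeasible {n s : ℕ} (x : Fin n → Fin 2 → ℝ) (y : Fin n → Fin s → ℝ)
    (d : ℝ)
    (ε : Fin n → ℝ) (δ : ℝ) (χ α : Fin n → ℝ)
    (β : Fin n → Fin 2 → ℝ) (γ : Fin n → Fin s → ℝ) : Prop :=
  (∀ i, 0 < χ i) ∧
  (∀ i, Real.log (x i 0) =
      -Real.log (χ i) + δ * (Real.log (x i 0) - Real.log (x i 1)) + ε i) ∧
  (∀ i, χ i = α i + (∑ j, β i j * (x i j / ((x i 0) ^ (1 - d) * (x i 1) ^ d)))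
      - ∑ k, γ i k * y i k) ∧
  (∀ i h, χ i ≤ α h + (∑ j, β h j * (x i j / ((x i 0) ^ (1 - d) * (x i 1) ^ d)))
      - ∑ k, γ h k * y i k) ∧
  (∀ i j, 0 ≤ β i j) ∧ (∀ i k, 0 ≤ γ i k)

/-- Theorem 2: at any optimal solution of the radial CNLS problem, the residuals
satisfy the sample orthogonality condition `∑ᵢ (ln x₁ᵢ − ln x₂ᵢ) ε̂ᵢ = 0`. -/
theorem stmt_5 {n s : ℕ}
    (x : Fin n → Fin 2 → ℝ) (hx : ∀ i j, 0 < x i j)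
    (y : Fin n → Fin s → ℝ)
    (d : ℝ) (hd : 0 < d) (hd1 : d < 1)
    (ε : Fin n → ℝ) (δ : ℝ) (χ α : Fin n → ℝ)
    (β : Fin n → Fin 2 → ℝ) (γ : Fin n → Fin s → ℝ)
    (hfeas : RadialCNLSFeasible x y d ε δ χ α β γ)
    (hopt : ∀ ε' δ' χ' α' β' γ', RadialCNLSFeasible x y d ε' δ' χ' α' β' γ' →
      (∑ i, (ε i) ^ 2) ≤ ∑ i, (ε' i) ^ 2) :
    ∑ i, (Real.log (x i 0) - Real.log (x i 1)) * ε i = 0 := by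
  set z : Fin n → ℝ := fun i => Real.log (x i 0) - Real.log (x i 1) with hz
  set S : ℝ := ∑ i, z i * ε i with hS
  set Q : ℝ := ∑ i, (z i) ^ 2 with hQ
  have hQ0 : 0 ≤ Q := Finset.sum_nonneg fun i _ => sq_nonneg _
  -- perturbed solution for any t
  have key : ∀ t : ℝ, RadialCNLSFeasible x y d (fun i => ε i - t * z i) (δ + t) χ α β γ := by
    intro t
    obtain ⟨h1, h2, h3, h4, h5, h6⟩ := hfeas
    refine ⟨h1, fun i => ?_, h3, h4, h5, h6⟩
    have := h2 i
    simp only [hz]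
    linarith
  have hineq : ∀ t : ℝ, 0 ≤ -2 * t * S + t ^ 2 * Q := by
    intro t
    have := hopt (fun i => ε i - t * z i) (δ + t) χ α β γ (key t)
    have hexp : ∑ i, (ε i - t * z i) ^ 2
        = ∑ i, (ε i) ^ 2 + (-2 * t * S + t ^ 2 * Q) := by
      rw [hS, hQ, Finset.mul_sum, Finset.mul_sum, ← Finset.sum_add_distrib,
        ← Finset.sum_add_distrib]
      apply Finset.sum_congr rfl
      intro i _
      ring
    rw [hexp] at this
    linarith
  rcases eq_or_lt_of_le hQ0 with hQe | hQp
  · -- Q = 0 ⇒ all z i = 0 ⇒ S = 0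
    have hz0 : ∀ i ∈ Finset.univ, (z i) ^ 2 = 0 := by
      intro i _
      have h := (Finset.sum_eq_zero_iff_of_nonneg
        (fun i (_ : i ∈ (Finset.univ : Finset (Fin n))) => sq_nonneg (z i))).mp hQe.symm
      exact h i (Finset.mem_univ i)
    calc ∑ i, z i * ε i = ∑ i : Fin n, 0 := by
          apply Finset.sum_congr rfl
          intro i _
          have := hz0 i (Finset.mem_univ i)
          have : z i = 0 := by nlinarith [sq_nonneg (z i)]
          simp [this]
      _ = 0 := by simp
  · -- Q > 0: take t = S / Q
    have h := hineq (S / Q)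
    have hQne : Q ≠ 0 := ne_of_gt hQp
    have : -2 * (S / Q) * S + (S / Q) ^ 2 * Q = -(S ^ 2) / Q := by
      field_simp
      ring
    rw [this] at h
    have hS2 : S ^ 2 ≤ 0 := by
      by_contra hcon
      push_neg at hcon
      have : -(S ^ 2) / Q < 0 := div_neg_of_neg_of_pos (by linarith) hQp
      linarith
    have : S = 0 := by nlinarith [sq_nonneg S]
    exact this
end

section
/- In the radial CNLS problem with two inputs, the optimal residuals ε̂ᵢ are invariant to the choice of the normalization parameter d ∈ (0,1): if (ε̂, δ̂) is optimal for parameter d, then for any other d' ∈ (0,1), the solution with δ' = δ̂ + (d' − d) and the same residuals ε̂ and suitably rescaled (χ, α, β, γ) is feasible and optimal, so the optimal value and residuals coincide across d. -/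
open Real

lemma amgm_strict {σ p : ℝ} (hσ : 0 < σ) (hσ1 : σ ≠ 1) (hp : 0 < p) (hp1 : p < 1) :
    1 < (1 - p) * σ ^ p + p * σ ^ (p - 1) := by
  have hs : (-1 : ℝ) ≤ σ - 1 := by linarith
  have hs' : σ - 1 ≠ 0 := sub_ne_zero.mpr hσ1
  have hB := rpow_one_add_lt_one_add_mul_self hs hs' (p := 1 - p) (by linarith) (by linarith)
  rw [show (1 : ℝ) + (σ - 1) = σ by ring] at hB
  have h2 : 0 < σ ^ (p - 1) := Real.rpow_pos_of_pos hσ _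
  have key : σ ^ (1 - p) * σ ^ (p - 1) = 1 := by
    rw [← Real.rpow_add hσ]; norm_num
  have key2 : σ * σ ^ (p - 1) = σ ^ p := by
    nth_rewrite 1 [← Real.rpow_one σ]
    rw [← Real.rpow_add hσ]; norm_num
  have h3 := mul_lt_mul_of_pos_right hB h2
  rw [key] at h3
  nlinarith [key2]

lemma znorm0 {n : ℕ} (x : Fin n → Fin 2 → ℝ) (hx : ∀ i j, 0 < x i j) (c : ℝ) (i : Fin n) :
    x i 0 / (x i 0 ^ (1 - c) * x i 1 ^ c) = (x i 0 / x i 1) ^ c := by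
  have h1 : x i 0 ^ (1 - c) * x i 0 ^ c = x i 0 := by
    rw [← Real.rpow_add (hx i 0), sub_add_cancel, Real.rpow_one]
  calc x i 0 / (x i 0 ^ (1 - c) * x i 1 ^ c)
      = (x i 0 ^ (1 - c) * x i 0 ^ c) / (x i 0 ^ (1 - c) * x i 1 ^ c) := by rw [h1]
    _ = x i 0 ^ c / x i 1 ^ c :=
        mul_div_mul_left _ _ (ne_of_gt (Real.rpow_pos_of_pos (hx i 0) _))
    _ = (x i 0 / x i 1) ^ c := (Real.div_rpow (hx i 0).le (hx i 1).le c).symm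

lemma znorm1 {n : ℕ} (x : Fin n → Fin 2 → ℝ) (hx : ∀ i j, 0 < x i j) (c : ℝ) (i : Fin n) :
    x i 1 / (x i 0 ^ (1 - c) * x i 1 ^ c) = (x i 0 / x i 1) ^ (c - 1) := by
  have h1 : x i 1 ^ (1 - c) * x i 1 ^ c = x i 1 := by
    rw [← Real.rpow_add (hx i 1), sub_add_cancel, Real.rpow_one]
  have hR : (0:ℝ) ≤ x i 0 / x i 1 := le_of_lt (div_pos (hx i 0) (hx i 1))
  calc x i 1 / (x i 0 ^ (1 - c) * x i 1 ^ c)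
      = (x i 1 ^ (1 - c) * x i 1 ^ c) / (x i 0 ^ (1 - c) * x i 1 ^ c) := by rw [h1]
    _ = x i 1 ^ (1 - c) / x i 0 ^ (1 - c) :=
        mul_div_mul_right _ _ (ne_of_gt (Real.rpow_pos_of_pos (hx i 1) _))
    _ = (x i 1 / x i 0) ^ (1 - c) := (Real.div_rpow (hx i 1).le (hx i 0).le _).symm
    _ = ((x i 0 / x i 1)⁻¹) ^ (1 - c) := by rw [inv_div]
    _ = ((x i 0 / x i 1) ^ (1 - c))⁻¹ := Real.inv_rpow hR _
    _ = (x i 0 / x i 1) ^ (-(1 - c)) := (Real.rpow_neg hR _).symm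
    _ = (x i 0 / x i 1) ^ (c - 1) := by rw [neg_sub]

lemma exists_slope {n : ℕ} (g N : Fin n → ℝ)
    (hgood : ∀ i, (g i = 0 ∧ N i ≤ 0) ∨ 0 < g i) :
    ∃ M : ℝ, 0 ≤ M ∧ ∀ i, N i ≤ M * g i := by
  refine ⟨∑ i, max 0 (N i / g i), Finset.sum_nonneg fun i _ => le_max_left _ _, fun i => ?_⟩
  rcases hgood i with ⟨hg0, hN⟩ | hgpos
  · rw [hg0, mul_zero]; exact hN
  · have hMi : max 0 (N i / g i) ≤ ∑ j, max 0 (N j / g j) :=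
      Finset.single_le_sum (f := fun j => max 0 (N j / g j))
        (fun j _ => le_max_left _ _) (Finset.mem_univ i)
    have : N i / g i * g i ≤ (∑ j, max 0 (N j / g j)) * g i :=
      mul_le_mul_of_nonneg_right ((le_max_right _ _).trans hMi) (le_of_lt hgpos)
    rwa [div_mul_cancel₀ _ (ne_of_gt hgpos)] at this

lemma radial_transfer {n s : ℕ} (x : Fin n → Fin 2 → ℝ) (hx : ∀ i j, 0 < x i j)
    (y : Fin n → Fin s → ℝ) (d d' : ℝ) (hd' : 0 < d') (hd'1 : d' < 1)
    (ε : Fin n → ℝ) (δ : ℝ) (χ α : Fin n → ℝ)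
    (β : Fin n → Fin 2 → ℝ) (γ : Fin n → Fin s → ℝ)
    (hfeas : RadialCNLSFeasible x y d ε δ χ α β γ) :
    ∃ χ' α' β' γ', RadialCNLSFeasible x y d' ε (δ + (d' - d)) χ' α' β' γ' := by
  obtain ⟨hχ, hlog, heq, hineq, hβ, hγ⟩ := hfeas
  have hR : ∀ i, 0 < x i 0 / x i 1 := fun i => div_pos (hx i 0) (hx i 1)
  have hT : ∀ i, 0 < (x i 0 / x i 1) ^ (d' - d) := fun i => Real.rpow_pos_of_pos (hR i) _
  have hU : ∀ i, 0 < (x i 0 / x i 1) ^ d' := fun i => Real.rpow_pos_of_pos (hR i) _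
  have hV : ∀ i, 0 < (x i 0 / x i 1) ^ (d' - 1) := fun i => Real.rpow_pos_of_pos (hR i) _
  have hsplit0 : ∀ i, (x i 0 / x i 1) ^ d'
      = (x i 0 / x i 1) ^ (d' - d) * (x i 0 / x i 1) ^ d := by
    intro i; rw [← Real.rpow_add (hR i)]; norm_num
  have hsplit1 : ∀ i, (x i 0 / x i 1) ^ (d' - 1)
      = (x i 0 / x i 1) ^ (d' - d) * (x i 0 / x i 1) ^ (d - 1) := by
    intro i; rw [← Real.rpow_add (hR i)]; ring_nf
  have heq2 : ∀ i, χ i = α i + (β i 0 * (x i 0 / x i 1) ^ d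
      + β i 1 * (x i 0 / x i 1) ^ (d - 1)) - ∑ k, γ i k * y i k := by
    intro i
    have h0 := heq i
    rwa [Fin.sum_univ_two, znorm0 x hx d i, znorm1 x hx d i] at h0
  have hineq2 : ∀ i h, χ i ≤ α h + (β h 0 * (x i 0 / x i 1) ^ d
      + β h 1 * (x i 0 / x i 1) ^ (d - 1)) - ∑ k, γ h k * y i k := by
    intro i h
    have h0 := hineq i h
    rwa [Fin.sum_univ_two, znorm0 x hx d i, znorm1 x hx d i] at h0
  -- choose the extra slopes M h
  have key : ∀ h : Fin n, ∃ M : ℝ, 0 ≤ M ∧ ∀ i,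
      (x i 0 / x i 1) ^ (d' - d) * χ i
        - ((x h 0 / x h 1) ^ (d' - d) * α h
          + (β h 0 * (x i 0 / x i 1) ^ d' + β h 1 * (x i 0 / x i 1) ^ (d' - 1))
          - (x h 0 / x h 1) ^ (d' - d) * ∑ k, γ h k * y i k)
      ≤ M * ((1 - d') * ((x i 0 / x i 1) ^ d' / (x h 0 / x h 1) ^ d')
          + d' * ((x i 0 / x i 1) ^ (d' - 1) / (x h 0 / x h 1) ^ (d' - 1)) - 1) := by
    intro h
    apply exists_slope
    intro i
    by_cases hcase : x i 0 / x i 1 = x h 0 / x h 1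
    · left
      constructor
      · rw [hcase, div_self (ne_of_gt (hU h)), div_self (ne_of_gt (hV h))]; ring
      · rw [← hcase]
        have h5 := mul_le_mul_of_nonneg_left (hineq2 i h) (le_of_lt (hT i))
        rw [hsplit0 i, hsplit1 i]
        nlinarith [h5]
    · right
      have hσ : 0 < (x i 0 / x i 1) / (x h 0 / x h 1) := div_pos (hR i) (hR h)
      have hσ1 : (x i 0 / x i 1) / (x h 0 / x h 1) ≠ 1 := fun h1 =>
        hcase ((div_eq_one_iff_eq (ne_of_gt (hR h))).mp h1)
      have hstrict := amgm_strict hσ hσ1 hd' hd'1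
      rw [Real.div_rpow (le_of_lt (hR i)) (le_of_lt (hR h)),
        Real.div_rpow (le_of_lt (hR i)) (le_of_lt (hR h))] at hstrict
      linarith
  choose M hM0 hMkey using key
  refine ⟨fun i => (x i 0 / x i 1) ^ (d' - d) * χ i,
    fun h => (x h 0 / x h 1) ^ (d' - d) * α h - M h,
    fun h => ![β h 0 + M h * ((1 - d') / (x h 0 / x h 1) ^ d'),
               β h 1 + M h * (d' / (x h 0 / x h 1) ^ (d' - 1))],
    fun h k => (x h 0 / x h 1) ^ (d' - d) * γ h k,
    ?_, ?_, ?_, ?_, ?_, ?_⟩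
  · intro i; exact mul_pos (hT i) (hχ i)
  · intro i
    have h1 := hlog i
    have hlt : Real.log ((x i 0 / x i 1) ^ (d' - d) * χ i)
        = (d' - d) * (Real.log (x i 0) - Real.log (x i 1)) + Real.log (χ i) := by
      rw [Real.log_mul (ne_of_gt (hT i)) (ne_of_gt (hχ i)), Real.log_rpow (hR i),
        Real.log_div (ne_of_gt (hx i 0)) (ne_of_gt (hx i 1))]
    rw [hlt]; linarith
  · intro i
    simp only [Fin.sum_univ_two, Matrix.cons_val_zero, Matrix.cons_val_one, Matrix.head_cons]
    rw [znorm0 x hx d' i, znorm1 x hx d' i]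
    have hsum : ∑ k, (x i 0 / x i 1) ^ (d' - d) * γ i k * y i k
        = (x i 0 / x i 1) ^ (d' - d) * ∑ k, γ i k * y i k := by
      rw [Finset.mul_sum]; exact Finset.sum_congr rfl fun k _ => by ring
    rw [hsum, heq2 i, hsplit0 i, hsplit1 i]
    have h1 : ((x i 0 / x i 1) : ℝ) ^ (d' - d) ≠ 0 := ne_of_gt (hT i)
    have h2 : ((x i 0 / x i 1) : ℝ) ^ d ≠ 0 := ne_of_gt (Real.rpow_pos_of_pos (hR i) _)
    have h3 : ((x i 0 / x i 1) : ℝ) ^ (d - 1) ≠ 0 := ne_of_gt (Real.rpow_pos_of_pos (hR i) _)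
    field_simp
    ring
  · intro i h
    simp only [Fin.sum_univ_two, Matrix.cons_val_zero, Matrix.cons_val_one, Matrix.head_cons]
    rw [znorm0 x hx d' i, znorm1 x hx d' i]
    have hsum : ∑ k, (x h 0 / x h 1) ^ (d' - d) * γ h k * y i k
        = (x h 0 / x h 1) ^ (d' - d) * ∑ k, γ h k * y i k := by
      rw [Finset.mul_sum]; exact Finset.sum_congr rfl fun k _ => by ring
    rw [hsum]
    have h0 := hMkey h i
    have e1 : M h * ((1 - d') / (x h 0 / x h 1) ^ d') * (x i 0 / x i 1) ^ d'
        = M h * ((1 - d') * ((x i 0 / x i 1) ^ d' / (x h 0 / x h 1) ^ d')) := by ring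
    have e2 : M h * (d' / (x h 0 / x h 1) ^ (d' - 1)) * (x i 0 / x i 1) ^ (d' - 1)
        = M h * (d' * ((x i 0 / x i 1) ^ (d' - 1) / (x h 0 / x h 1) ^ (d' - 1))) := by ring
    nlinarith [h0]
  · intro h j
    fin_cases j
    · have : (0:ℝ) ≤ M h * ((1 - d') / (x h 0 / x h 1) ^ d') :=
        mul_nonneg (hM0 h) (div_nonneg (by linarith) (le_of_lt (hU h)))
      simpa using add_nonneg (hβ h 0) this
    · have : (0:ℝ) ≤ M h * (d' / (x h 0 / x h 1) ^ (d' - 1)) :=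
        mul_nonneg (hM0 h) (div_nonneg (le_of_lt hd') (le_of_lt (hV h)))
      simpa using add_nonneg (hβ h 1) this
  · intro h k
    exact mul_nonneg (le_of_lt (hT h)) (hγ h k)


/-- The optimal residuals of radial CNLS are invariant to the normalization
parameter `d`: if `(ε̂, δ̂, …)` is optimal for `d`, then for any `d'` the same
residuals together with `δ' = δ̂ + (d' − d)` and suitably rescaled `(χ, α, β, γ)`
are feasible and optimal for `d'`. -/
theorem stmt_7 {n s : ℕ}
    (x : Fin n → Fin 2 → ℝ) (hx : ∀ i j, 0 < x i j)
    (y : Fin n → Fin s → ℝ)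
    (d d' : ℝ) (hd : 0 < d) (hd1 : d < 1) (hd' : 0 < d') (hd'1 : d' < 1)
    (ε : Fin n → ℝ) (δ : ℝ) (χ α : Fin n → ℝ)
    (β : Fin n → Fin 2 → ℝ) (γ : Fin n → Fin s → ℝ)
    (hfeas : RadialCNLSFeasible x y d ε δ χ α β γ)
    (hopt : ∀ ε' δ' χ' α' β' γ', RadialCNLSFeasible x y d ε' δ' χ' α' β' γ' →
      (∑ i, (ε i) ^ 2) ≤ ∑ i, (ε' i) ^ 2) :
    ∃ (χ' α' : Fin n → ℝ) (β' : Fin n → Fin 2 → ℝ) (γ' : Fin n → Fin s → ℝ),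
      RadialCNLSFeasible x y d' ε (δ + (d' - d)) χ' α' β' γ' ∧
      (∀ ε'' δ'' χ'' α'' β'' γ'', RadialCNLSFeasible x y d' ε'' δ'' χ'' α'' β'' γ'' →
        (∑ i, (ε i) ^ 2) ≤ ∑ i, (ε'' i) ^ 2) := by

  obtain ⟨χ', α', β', γ', hfeas'⟩ := radial_transfer x hx y d d' hd' hd'1 ε δ χ α β γ hfeas
  refine ⟨χ', α', β', γ', hfeas', ?_⟩
  intro ε'' δ'' χ'' α'' β'' γ'' hfeas''
  obtain ⟨χ3, α3, β3, γ3, hfeas3⟩ :=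
    radial_transfer x hx y d' d hd hd1 ε'' δ'' χ'' α'' β'' γ'' hfeas''
  exact hopt ε'' (δ'' + (d - d')) χ3 α3 β3 γ3 hfeas3
end
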